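/- Let M = (A, Σ, δ, ρ) be a reversible Mealy automaton, let C be a connected component of M^n for some n ≥ 1, let u be a state of C and x ∈ A, and let D be the connected component of ux in M^{n+1}. Then: (i) for every state v of C there exists a state of D whose length-n prefix is v; (ii) if moreover y ∈ A with y ≠ x and uy is also a state of D, then for every state v of C there exist two distinct states of D with prefix v. In particular, the number of states of C divides the number of states of D. -/

import Mathlib

/-- Extended production function of a Mealy automaton: `mealyMap δ ρ x` is the
action of the state `x` on finite words over the alphabet. -/
def mealyMap {A S : Type*} (δ : S → A → A) (ρ : A → S → S) : A → List S → List S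
  | _, [] => []
  | x, i :: s => ρ x i :: mealyMap δ ρ (δ i x) s

/-- The semigroup generated by a Mealy automaton: the subsemigroup of maps
`Σ* → Σ*` (under composition) generated by the production functions. -/
def mealySemigroup {A S : Type*} (δ : S → A → A) (ρ : A → S → S) :
    Subsemigroup (Function.End (List S)) :=
  Subsemigroup.closure (Set.range fun x => (mealyMap δ ρ x : Function.End (List S)))

/-- The group generated by an invertible Mealy automaton: the subgroup of
permutations of `Σ*` generated by the production functions. -/
def mealyGroup {A S : Type*} (δ : S → A → A) (ρ : A → S → S) :
    Subgroup (Equiv.Perm (List S)) :=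
  Subgroup.closure {f : Equiv.Perm (List S) | ∃ x : A, ⇑f = mealyMap δ ρ x}

/-- A cycle in the automaton `(A, Σ, δ)`: pairwise distinct states
`states 0, …, states (n-1)` with transitions `states k —labels k→ states (k+1 mod n)`. -/
structure MealyCycle {A S : Type*} (δ : S → A → A) where
  n : ℕ
  npos : 0 < n
  states : Fin n → A
  labels : Fin n → S
  inj : Function.Injective states
  step : ∀ k : Fin n, δ (labels k) (states k) = states ⟨(k + 1) % n, Nat.mod_lt _ npos⟩

/-- The cycle has an external exit. -/
def HasExternalExit {A S : Type*} {δ : S → A → A} (C : MealyCycle δ) : Prop :=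
  ∃ (k : Fin C.n) (i : S), δ i (C.states k) ∉ Set.range C.states

/-- The cycle has an internal exit. -/
def HasInternalExit {A S : Type*} {δ : S → A → A} (C : MealyCycle δ) : Prop :=
  ∃ (k : Fin C.n) (i : S), δ i (C.states k) ∈ Set.range C.states ∧
    δ i (C.states k) ≠ δ (C.labels k) (C.states k)

/-- `v` is reachable from `u` in the automaton `(A, Σ, δ)`. -/
def Reachable {A S : Type*} (δ : S → A → A) (u v : A) : Prop :=
  ∃ s : List S, s.foldl (fun a i => δ i a) u = v

/-- Action of a word `s ∈ Σ*` on states of powers of the automaton (words over `A`),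
via the production functions of the dual automaton: `dualAct δ ρ s = δ_s`. -/
def dualAct {A S : Type*} (δ : S → A → A) (ρ : A → S → S) (s : List S) (u : List A) : List A :=
  s.foldl (fun w i => mealyMap ρ δ i w) u

/-- Two states of a power of a reversible Mealy automaton lie in the same
connected component iff some `δ_s` maps one to the other. -/
def sameComp {A S : Type*} (δ : S → A → A) (ρ : A → S → S) (u w : List A) : Prop :=
  ∃ s : List S, dualAct δ ρ s u = w

section Aux
variable {A S : Type*}

lemma mealyMap_length (δ : S → A → A) (ρ : A → S → S) (x : A) (s : List S) :
    (mealyMap δ ρ x s).length = s.length := by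
  induction s generalizing x with
  | nil => rfl
  | cons i t ih => simp [mealyMap, ih]

lemma mealyMap_append (δ : S → A → A) (ρ : A → S → S) (x : A) (s t : List S) :
    mealyMap δ ρ x (s ++ t) =
      mealyMap δ ρ x s ++ mealyMap δ ρ (s.foldl (fun a i => δ i a) x) t := by
  induction s generalizing x with
  | nil => rfl
  | cons i s' ih => simp [mealyMap, ih]

lemma mealyMap_injective (δ : S → A → A) (ρ : A → S → S)
    (hρ : ∀ x : A, Function.Injective (ρ x)) (x : A) :
    Function.Injective (mealyMap δ ρ x) := by
  intro s t h
  induction s generalizing x t with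
  | nil => cases t with
    | nil => rfl
    | cons j t' => simp [mealyMap] at h
  | cons i s' ih =>
    cases t with
    | nil => simp [mealyMap] at h
    | cons j t' =>
      simp only [mealyMap, List.cons.injEq] at h
      obtain ⟨h1, h2⟩ := h
      obtain rfl : i = j := hρ x h1
      exact congrArg (i :: ·) (ih (δ i x) h2)

variable (δ : S → A → A) (ρ : A → S → S)

lemma dualAct_append (s t : List S) (u : List A) :
    dualAct δ ρ (s ++ t) u = dualAct δ ρ t (dualAct δ ρ s u) :=
  List.foldl_append

lemma dualAct_length (s : List S) (u : List A) :
    (dualAct δ ρ s u).length = u.length := by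
  induction s generalizing u with
  | nil => rfl
  | cons i s' ih => simpa [dualAct, mealyMap_length] using (ih _).trans (mealyMap_length ρ δ i u)

lemma dualAct_injective (hrev : ∀ i : S, Function.Bijective (δ i)) (s : List S) :
    Function.Injective (dualAct δ ρ s) := by
  induction s with
  | nil => exact fun a b h => h
  | cons i s' ih =>
    intro a b h
    exact mealyMap_injective ρ δ (fun x => (hrev x).injective) i (ih h)

lemma dualAct_concat (hrev : ∀ i : S, Function.Bijective (δ i)) (s : List S) (u : List A) :
    ∃ g : A → A, Function.Injective g ∧
      ∀ y : A, dualAct δ ρ s (u ++ [y]) = dualAct δ ρ s u ++ [g y] := by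
  induction s generalizing u with
  | nil => exact ⟨id, Function.injective_id, fun y => rfl⟩
  | cons i s' ih =>
    obtain ⟨g, hg, hgy⟩ := ih (mealyMap ρ δ i u)
    refine ⟨g ∘ δ (u.foldl (fun a i => ρ i a) i), hg.comp (hrev _).injective, fun y => ?_⟩
    show dualAct δ ρ s' (mealyMap ρ δ i (u ++ [y])) = _
    rw [mealyMap_append ρ δ i u [y]]
    show dualAct δ ρ s' (mealyMap ρ δ i u ++ [δ _ y]) = _
    exact hgy (δ _ y)

lemma sameComp_trans {u v w : List A} (h1 : sameComp δ ρ u v) (h2 : sameComp δ ρ v w) :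
    sameComp δ ρ u w := by
  obtain ⟨s, hs⟩ := h1; obtain ⟨t, ht⟩ := h2
  exact ⟨s ++ t, by rw [dualAct_append, hs, ht]⟩

lemma dualAct_join_replicate (s : List S) (m : ℕ) (u : List A) :
    dualAct δ ρ (List.flatten (List.replicate m s)) u = (dualAct δ ρ s)^[m] u := by
  induction m generalizing u with
  | zero => rfl
  | succ m ih =>
    rw [List.replicate_succ, List.flatten_cons, dualAct_append,
      Function.iterate_succ_apply, ih]

lemma sameComp_symm [Finite A] (hrev : ∀ i : S, Function.Bijective (δ i))
    {u v : List A} (h : sameComp δ ρ u v) : sameComp δ ρ v u := by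
  obtain ⟨s, hs⟩ := h
  set f : List A → List A := dualAct δ ρ s with hf
  have hlen : ∀ w : List A, w.length = u.length → (f w).length = u.length := by
    intro w hw; rw [hf, dualAct_length, hw]
  set T := {w : List A // w.length = u.length}
  have : Finite T := (List.finite_length_eq A u.length).to_subtype
  set F : T → T := fun w => ⟨f w.1, hlen w.1 w.2⟩ with hF
  have hFi : Function.Injective F := by
    intro a b hab
    exact Subtype.ext (dualAct_injective δ ρ hrev s (congrArg Subtype.val hab))
  -- find k > 0 with F^[k] u0 = u0
  set u0 : T := ⟨u, rfl⟩
  obtain ⟨a, b, hne, hab⟩ : ∃ a b : ℕ, a ≠ b ∧ F^[a] u0 = F^[b] u0 :=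
    Finite.exists_ne_map_eq_of_infinite (fun k : ℕ => F^[k] u0)
  wlog hlt : a < b generalizing a b
  · exact this b a hne.symm hab.symm (by omega)
  have hk : F^[b - a] u0 = u0 := by
    have : F^[a] (F^[b-a] u0) = F^[a] u0 := by
      rw [← Function.iterate_add_apply]
      rw [show a + (b - a) = b by omega]
      exact hab.symm
    exact hFi.iterate a this
  have hcoe : ∀ (m : ℕ) (w : T), (F^[m] w).1 = f^[m] w.1 := by
    intro m
    induction m with
    | zero => intro w; rfl
    | succ m ih =>
      intro w
      rw [Function.iterate_succ_apply, Function.iterate_succ_apply, ih]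
  have hfk : f^[b - a] u = u := by
    have := congrArg Subtype.val hk
    rwa [hcoe] at this
  have hpos : 0 < b - a := by omega
  refine ⟨List.flatten (List.replicate (b - a - 1) s), ?_⟩
  rw [dualAct_join_replicate, ← hs]
  show f^[b - a - 1] (f u) = u
  rw [← Function.iterate_succ_apply, show (b - a - 1).succ = b - a from by omega, hfk]

end Aux

/-- let `M` be reversible, `C` the connected component of a state `u` of
`M^n` (`n ≥ 1`), `x ∈ A`, and `D` the connected component of `ux` in `M^(n+1)`.
(i) every state `v` of `C` is the length-`n` prefix of some state of `D`;
(ii) if `uy ∈ D` for some `y ≠ x`, every state `v` of `C` is the prefix of two distinct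
states of `D`; and `#C` divides `#D`. -/
theorem component_splitting
    {A S : Type*} [Fintype A] [Fintype S]
    (δ : S → A → A) (ρ : A → S → S)
    (hrev : ∀ i : S, Function.Bijective (δ i))
    (n : ℕ) (hn : 1 ≤ n) (u : List A) (hu : u.length = n) (x : A) :
    (∀ v : List A, sameComp δ ρ u v →
        ∃ w : List A, sameComp δ ρ (u ++ [x]) w ∧ v <+: w)
    ∧ (∀ y : A, y ≠ x → sameComp δ ρ (u ++ [x]) (u ++ [y]) →
        ∀ v : List A, sameComp δ ρ u v →
          ∃ w₁ w₂ : List A, w₁ ≠ w₂ ∧ sameComp δ ρ (u ++ [x]) w₁ ∧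
            sameComp δ ρ (u ++ [x]) w₂ ∧ v <+: w₁ ∧ v <+: w₂)
    ∧ Set.ncard {w | sameComp δ ρ u w} ∣ Set.ncard {w | sameComp δ ρ (u ++ [x]) w} := by
  classical
  refine ⟨?_, ?_, ?_⟩
  · rintro v ⟨s, hs⟩
    obtain ⟨g, hg, hgy⟩ := dualAct_concat δ ρ hrev s u
    exact ⟨dualAct δ ρ s (u ++ [x]), ⟨s, rfl⟩, by rw [hgy, hs]; exact ⟨[g x], rfl⟩⟩
  · rintro y hyx ⟨s0, hs0⟩ v ⟨s, hs⟩
    obtain ⟨g, hg, hgy⟩ := dualAct_concat δ ρ hrev s u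
    refine ⟨v ++ [g x], v ++ [g y], ?_, ⟨s, by rw [hgy, hs]⟩,
      ⟨s0 ++ s, by rw [dualAct_append, hs0, hgy, hs]⟩, ⟨[g x], rfl⟩, ⟨[g y], rfl⟩⟩
    intro h
    have : g x = g y := by simpa using List.append_cancel_left h
    exact hyx (hg this).symm
  · set C : Set (List A) := {w | sameComp δ ρ u w} with hCdef
    set D : Set (List A) := {w | sameComp δ ρ (u ++ [x]) w} with hDdef
    have hClen : ∀ w ∈ C, w.length = n := by
      rintro w ⟨s, hs⟩; rw [← hs, dualAct_length, hu]
    have hCfin : C.Finite := (List.finite_length_eq A n).subset hClen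
    have hDlen : ∀ w ∈ D, w.length = n + 1 := by
      rintro w ⟨s, hs⟩; rw [← hs, dualAct_length]; simp [hu]
    have hDfin : D.Finite := (List.finite_length_eq A (n + 1)).subset hDlen
    -- structure of elements of D
    have hwD : ∀ w ∈ D, ∃ v z, v ∈ C ∧ w = v ++ [z] := by
      rintro w ⟨s, hs⟩
      obtain ⟨g, hg, hgy⟩ := dualAct_concat δ ρ hrev s u
      exact ⟨dualAct δ ρ s u, g x, ⟨s, rfl⟩, by rw [← hs, hgy]⟩
    have htake : ∀ v : List A, v ∈ C → ∀ z : A, (v ++ [z]).take n = v := by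
      intro v hv z
      exact List.take_left' (hClen v hv)
    have hmapsto : ∀ w ∈ hDfin.toFinset, w.take n ∈ hCfin.toFinset := by
      intro w hw
      rw [Set.Finite.mem_toFinset] at hw ⊢
      obtain ⟨v, z, hv, rfl⟩ := hwD w hw
      rw [htake v hv z]; exact hv
    have key : ∀ v1 ∈ C, ∀ v2 ∈ C,
        (hDfin.toFinset.filter (fun w => w.take n = v1)).card ≤
          (hDfin.toFinset.filter (fun w => w.take n = v2)).card := by
      intro v1 hv1 v2 hv2
      have h12 : sameComp δ ρ v1 v2 := sameComp_trans δ ρ (sameComp_symm δ ρ hrev hv1) hv2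
      obtain ⟨t, ht⟩ := h12
      obtain ⟨g, hg, hgy⟩ := dualAct_concat δ ρ hrev t v1
      apply Finset.card_le_card_of_injOn (dualAct δ ρ t)
      · intro w hw
        rw [Finset.mem_coe, Finset.mem_filter, Set.Finite.mem_toFinset] at hw ⊢
        obtain ⟨hwD', hwt⟩ := hw
        obtain ⟨v, z, hv, rfl⟩ := hwD w hwD'
        have hveq : v = v1 := by rw [htake v hv z] at hwt; exact hwt
        subst hveq
        constructor
        · exact sameComp_trans δ ρ hwD' ⟨t, rfl⟩
        · rw [hgy, ht, htake v2 hv2]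
      · intro a _ b _ hab
        exact dualAct_injective δ ρ hrev t hab
    have hmem_u : u ∈ C := ⟨[], rfl⟩
    set m := (hDfin.toFinset.filter (fun w => w.take n = u)).card with hm
    have hsum : hDfin.toFinset.card = ∑ v ∈ hCfin.toFinset,
        (hDfin.toFinset.filter (fun w => w.take n = v)).card :=
      Finset.card_eq_sum_card_fiberwise hmapsto
    have hconst : ∀ v ∈ hCfin.toFinset,
        (hDfin.toFinset.filter (fun w => w.take n = v)).card = m := by
      intro v hv
      rw [Set.Finite.mem_toFinset] at hv
      exact le_antisymm (key v hv u hmem_u) (key u hmem_u v hv)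
    rw [Finset.sum_congr rfl hconst, Finset.sum_const, smul_eq_mul] at hsum
    rw [Set.ncard_eq_toFinset_card _ hCfin, Set.ncard_eq_toFinset_card _ hDfin]
    exact ⟨m, hsum⟩
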